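/- arXiv:1507.06092 — 7 statements merged into one kernel-verified Lean document; each statement's English description precedes it below -/
import Mathlib

section
/- Let F be a continuous CDF of a nonnegative random variable, and suppose 0 ≤ c_F⁻ ≤ c_F ≤ c_F⁺ < v with c_F⁺ > c_F⁻. Define z̃(p_F) = c_F·p_F + v·∫₀^{p̃-p̄_F} F(s)ds + c_F⁺·∫_{p̃-p̄_F}^{p̃-p_F} F(s)ds + c_F⁻·∫_{p̃-p_F}^{p̃} F(s)ds − c_F⁻·p_F for p_F ∈ [0, p̄_F]. Then z̃ is convex on [0, p̄_F]. -/
open intervalIntegral Set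

/-- convexity of the expected two-stage portfolio cost z̃ on [0, p̄_F]. -/
theorem stmt1
    (F : ℝ → ℝ) (v cF cFu cFd pbF pt : ℝ)
    (hFcont : Continuous F) (hFmono : Monotone F)
    (hF0 : ∀ x < 0, F x = 0) (hFrange : ∀ x, F x ∈ Set.Icc (0 : ℝ) 1)
    (h0 : 0 ≤ cFd) (h1 : cFd ≤ cF) (h2 : cF ≤ cFu) (h3 : cFu < v)
    (h4 : cFd < cFu)
    (hpbF : 0 < pbF) (hpt : 0 ≤ pt)
    (ztilde : ℝ → ℝ)
    (hz : ztilde = fun pF => cF * pF + v * (∫ s in (0:ℝ)..(pt - pbF), F s)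
        + cFu * (∫ s in (pt - pbF)..(pt - pF), F s)
        + cFd * (∫ s in (pt - pF)..pt, F s) - cFd * pF) :
    ConvexOn ℝ (Set.Icc (0 : ℝ) pbF) ztilde := by
  have hInt : ∀ a b : ℝ, IntervalIntegrable F MeasureTheory.volume a b := fun a b =>
    hFcont.intervalIntegrable a b
  -- derivative of ztilde
  have hderiv : ∀ x : ℝ, HasDerivAt ztilde (cF - cFd - (cFu - cFd) * F (pt - x)) x := by
    intro x
    have hu : HasDerivAt (fun y : ℝ => pt - y) (-1) x := by
      simpa using (hasDerivAt_id x).const_sub pt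
    have hg : HasDerivAt (fun b : ℝ => ∫ s in (pt - pbF)..b, F s) (F (pt - x)) (pt - x) :=
      intervalIntegral.integral_hasDerivAt_right (hInt _ _)
        (hFcont.stronglyMeasurableAtFilter _ _) hFcont.continuousAt
    have hh : HasDerivAt (fun b : ℝ => ∫ s in pt..b, F s) (F (pt - x)) (pt - x) :=
      intervalIntegral.integral_hasDerivAt_right (hInt _ _)
        (hFcont.stronglyMeasurableAtFilter _ _) hFcont.continuousAt
    have hg' : HasDerivAt (fun y : ℝ => ∫ s in (pt - pbF)..(pt - y), F s)
        (F (pt - x) * (-1)) x := hg.comp x hu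
    have hh' : HasDerivAt (fun y : ℝ => ∫ s in (pt - y)..pt, F s)
        (F (pt - x)) x := by
      have h1 : HasDerivAt (fun y : ℝ => ∫ s in pt..(pt - y), F s)
          (F (pt - x) * (-1)) x := hh.comp x hu
      have h2 : HasDerivAt (fun y : ℝ => -∫ s in pt..(pt - y), F s)
          (-(F (pt - x) * (-1))) x := h1.neg
      have heq : (fun y : ℝ => -∫ s in pt..(pt - y), F s)
          = fun y : ℝ => ∫ s in (pt - y)..pt, F s := by
        funext y; rw [intervalIntegral.integral_symm, neg_neg]
      rw [heq] at h2
      simpa using h2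
    rw [hz]
    have := ((((hasDerivAt_id x).const_mul cF).add (hasDerivAt_const x
        (v * (∫ s in (0:ℝ)..(pt - pbF), F s)))).add (hg'.const_mul cFu)).add
        (hh'.const_mul cFd) |>.sub ((hasDerivAt_id x).const_mul cFd)
    refine this.congr_deriv ?_
    ring
  have hdiff : Differentiable ℝ ztilde := fun x => (hderiv x).differentiableAt
  have hderiv_eq : deriv ztilde = fun x => cF - cFd - (cFu - cFd) * F (pt - x) := by
    funext x; exact (hderiv x).deriv
  have hmono : Monotone (deriv ztilde) := by
    rw [hderiv_eq]
    intro x y hxy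
    have hF : F (pt - y) ≤ F (pt - x) := hFmono (by linarith)
    have : (cFu - cFd) * F (pt - y) ≤ (cFu - cFd) * F (pt - x) :=
      mul_le_mul_of_nonneg_left hF (by linarith)
    simp only
    linarith
  exact (hmono.monotoneOn _).convexOn_of_deriv (convex_Icc 0 pbF)
    hdiff.continuous.continuousOn (hdiff.differentiableOn)
end

section
/- Let W be a nonnegative random variable with CDF F and density f. For given forward dispatch quantities p_F ∈ [0, p̄_F] and p_W ≥ 0, the expected balancing cost equals C = v·∫₀^{p_F + p_W − p̄_F} F(s)ds + c_F⁺·∫_{p_F + p_W − p̄_F}^{p_W} F(s)ds + c_F⁻·∫_{p_W}^{p_F + p_W} F(s)ds − c_F⁻·p_F, where the expected balancing cost is defined as E[v·s(W) + c_F⁺·p⁺(W) − c_F⁻·p⁻(W)] with: when W ≤ p_W, p⁺(W) = min(p̄_F − p_F, p_W − W), p⁻(W) = 0, s(W) = max(0, p_W − W − p̄_F + p_F); and when W > p_W, p⁺(W) = 0, p⁻(W) = min(p_F, W − p_W), s(W) = 0. -/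
open MeasureTheory Set intervalIntegral

/-- Auxiliary: volume of `Ici w ∩ Ioc lo hi` as a real number. -/
lemma aux_vol (lo hi w : ℝ) (h : lo ≤ hi) :
    (volume (Ici w ∩ Ioc lo hi)).toReal = min (hi - lo) (max 0 (hi - w)) := by
  rcases le_or_gt w lo with hw | hw
  · have hinter : Ici w ∩ Ioc lo hi = Ioc lo hi := by
      apply inter_eq_right.mpr
      intro x hx
      exact le_trans hw (le_of_lt hx.1)
    rw [hinter, Real.volume_Ioc, ENNReal.toReal_ofReal (by linarith)]
    have h1 : hi - lo ≤ max 0 (hi - w) := le_max_of_le_right (by linarith)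
    exact (min_eq_left h1).symm
  · have hinter : Ici w ∩ Ioc lo hi = Icc w hi := by
      ext x
      simp only [mem_inter_iff, mem_Ici, mem_Ioc, mem_Icc]
      constructor
      · rintro ⟨h1, _, h3⟩; exact ⟨h1, h3⟩
      · rintro ⟨h1, h2⟩; exact ⟨h1, lt_of_lt_of_le hw h1, h2⟩
    rw [hinter, Real.volume_Icc, ENNReal.toReal_ofReal']
    rcases le_or_gt w hi with hwh | hwh
    · have : max 0 (hi - w) = hi - w := max_eq_right (by linarith)
      rw [this, min_eq_right (by linarith), max_comm]
      exact this
    · have : max 0 (hi - w) = 0 := max_eq_left (by linarith)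
      rw [this, min_eq_right (by linarith), max_eq_right (by linarith : hi - w ≤ 0)]

/-- Key Fubini lemma: interval integral of the CDF as an expectation. -/
lemma aux_key {Ω : Type*} [MeasurableSpace Ω] (P : Measure Ω) [IsProbabilityMeasure P]
    (W : Ω → ℝ) (hWmeas : Measurable W)
    (F : ℝ → ℝ) (hF : ∀ x, F x = (P {ω | W ω ≤ x}).toReal)
    (lo hi : ℝ) (h : lo ≤ hi) :
    ∫ s in lo..hi, F s = ∫ ω, min (hi - lo) (max 0 (hi - W ω)) ∂P := by
  set ν := volume.restrict (Ioc lo hi) with hν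
  haveI : IsFiniteMeasure ν := by
    constructor
    rw [hν, Measure.restrict_apply_univ]
    exact measure_Ioc_lt_top
  have hS : MeasurableSet {p : Ω × ℝ | W p.1 ≤ p.2} :=
    measurableSet_le (hWmeas.comp measurable_fst) measurable_snd
  have hint : Integrable
      (Function.uncurry fun (ω : Ω) (s : ℝ) =>
        Set.indicator {p : Ω × ℝ | W p.1 ≤ p.2} (fun _ => (1 : ℝ)) (ω, s))
      (P.prod ν) := by
    have : (Function.uncurry fun (ω : Ω) (s : ℝ) =>
        Set.indicator {p : Ω × ℝ | W p.1 ≤ p.2} (fun _ => (1 : ℝ)) (ω, s)) =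
        Set.indicator {p : Ω × ℝ | W p.1 ≤ p.2} (fun _ => (1 : ℝ)) := by
      funext p; rcases p with ⟨ω, s⟩; rfl
    rw [this]
    exact (integrable_const (1 : ℝ)).indicator hS
  have swap := MeasureTheory.integral_integral_swap hint
  -- compute the inner integral over s
  have hinner : ∀ ω : Ω, (∫ s, Set.indicator {p : Ω × ℝ | W p.1 ≤ p.2}
      (fun _ => (1 : ℝ)) (ω, s) ∂ν) = min (hi - lo) (max 0 (hi - W ω)) := by
    intro ω
    have heq : (fun s => Set.indicator {p : Ω × ℝ | W p.1 ≤ p.2} (fun _ => (1 : ℝ)) (ω, s))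
        = Set.indicator (Ici (W ω)) (fun _ => (1 : ℝ)) := by
      funext s
      by_cases hs : W ω ≤ s
      · rw [Set.indicator_of_mem (by exact hs) , Set.indicator_of_mem (by exact hs)]
      · rw [Set.indicator_of_notMem (by exact hs), Set.indicator_of_notMem (by exact hs)]
    rw [heq, integral_indicator_const (1 : ℝ) measurableSet_Ici, hν,
      measureReal_def, Measure.restrict_apply measurableSet_Ici, smul_eq_mul, mul_one]
    exact aux_vol lo hi (W ω) h
  -- compute the inner integral over ω
  have houter : ∀ s : ℝ, (∫ ω, Set.indicator {p : Ω × ℝ | W p.1 ≤ p.2}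
      (fun _ => (1 : ℝ)) (ω, s) ∂P) = F s := by
    intro s
    have heq : (fun ω => Set.indicator {p : Ω × ℝ | W p.1 ≤ p.2} (fun _ => (1 : ℝ)) (ω, s))
        = Set.indicator {ω | W ω ≤ s} (fun _ => (1 : ℝ)) := by
      funext ω
      by_cases hs : W ω ≤ s
      · rw [Set.indicator_of_mem (by exact hs), Set.indicator_of_mem (by exact hs)]
      · rw [Set.indicator_of_notMem (by exact hs), Set.indicator_of_notMem (by exact hs)]
    rw [heq, integral_indicator_const (1 : ℝ) (measurableSet_le hWmeas measurable_const),
      smul_eq_mul, mul_one, measureReal_def, hF]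
  calc ∫ s in lo..hi, F s = ∫ s, F s ∂ν := by
        rw [intervalIntegral.integral_of_le h]
    _ = ∫ s, (∫ ω, Set.indicator {p : Ω × ℝ | W p.1 ≤ p.2}
          (fun _ => (1 : ℝ)) (ω, s) ∂P) ∂ν := by
        congr 1; funext s; rw [houter s]
    _ = ∫ ω, (∫ s, Set.indicator {p : Ω × ℝ | W p.1 ≤ p.2}
          (fun _ => (1 : ℝ)) (ω, s) ∂ν) ∂P := swap.symm
    _ = ∫ ω, min (hi - lo) (max 0 (hi - W ω)) ∂P := by
        congr 1; funext ω; rw [hinner ω]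

/-- Pointwise scalar identity for the cost. -/
lemma aux_scalar (v cFu cFd pbF pF pW w : ℝ)
    (hpF0 : 0 ≤ pF) (hpFb : pF ≤ pbF) (hw : 0 ≤ w) :
    (if w ≤ pW then
        v * max 0 (pW - w - pbF + pF) + cFu * min (pbF - pF) (pW - w)
      else
        -(cFd * min pF (w - pW)))
    = v * max 0 (pF + pW - pbF - w)
      + cFu * min (pbF - pF) (max 0 (pW - w))
      + (cFd * min pF (max 0 (pF + pW - w)) - cFd * pF) := by
  split_ifs with h
  · have h1 : max 0 (pW - w) = pW - w := max_eq_right (by linarith)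
    have h2 : min pF (max 0 (pF + pW - w)) = pF := by
      rw [max_eq_right (by linarith)]
      exact min_eq_left (by linarith)
    have h3 : max 0 (pW - w - pbF + pF) = max 0 (pF + pW - pbF - w) := by
      congr 1; ring
    rw [h1, h2, h3]; ring
  · push_neg at h
    have h1 : max 0 (pF + pW - pbF - w) = 0 := max_eq_left (by linarith)
    have h2 : max 0 (pW - w) = 0 := max_eq_left (by linarith)
    rw [h1, h2, min_eq_right (by linarith : (0:ℝ) ≤ pbF - pF)]
    rcases le_total pF (w - pW) with hc | hc
    · rw [min_eq_left hc, max_eq_left (by linarith), min_eq_right hpF0]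
      ring
    · rw [min_eq_right hc, max_eq_right (by linarith), min_eq_right (by linarith)]
      ring

/-- closed form of the expected balancing cost (Proposition 2). -/
theorem stmt4 {Ω : Type*} [MeasurableSpace Ω] (P : Measure Ω) [IsProbabilityMeasure P]
    (W : Ω → ℝ) (hWmeas : Measurable W) (hWnn : ∀ ω, 0 ≤ W ω)
    (hWint : Integrable W P)
    (F : ℝ → ℝ) (hF : ∀ x, F x = (P {ω | W ω ≤ x}).toReal)
    (hFcont : Continuous F)
    (v cFu cFd pbF pF pW : ℝ)
    (hv : cFu < v) (hud : cFd ≤ cFu) (hd : 0 ≤ cFd) (hpbF : 0 < pbF)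
    (hpF : pF ∈ Set.Icc (0 : ℝ) pbF) (hpW : 0 ≤ pW)
    (cost : ℝ → ℝ)
    (hcost : cost = fun w =>
      if w ≤ pW then
        v * max 0 (pW - w - pbF + pF) + cFu * min (pbF - pF) (pW - w)
      else
        -(cFd * min pF (w - pW))) :
    ∫ ω, cost (W ω) ∂P =
      v * (∫ s in (0:ℝ)..(pF + pW - pbF), F s)
      + cFu * (∫ s in (pF + pW - pbF)..pW, F s)
      + cFd * (∫ s in pW..(pF + pW), F s)
      - cFd * pF := by
  obtain ⟨hpF0, hpFb⟩ := hpF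
  -- the three expectation identities
  have E2 : ∫ s in (pF + pW - pbF)..pW, F s
      = ∫ ω, min (pbF - pF) (max 0 (pW - W ω)) ∂P := by
    rw [aux_key P W hWmeas F hF (pF + pW - pbF) pW (by linarith)]
    have h : pW - (pF + pW - pbF) = pbF - pF := by ring
    rw [h]
  have E3 : ∫ s in pW..(pF + pW), F s
      = ∫ ω, min pF (max 0 (pF + pW - W ω)) ∂P := by
    rw [aux_key P W hWmeas F hF pW (pF + pW) (by linarith)]
    have h : pF + pW - pW = pF := by ring
    rw [h]
  have E1 : ∫ s in (0:ℝ)..(pF + pW - pbF), F s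
      = ∫ ω, max 0 (pF + pW - pbF - W ω) ∂P := by
    rcases le_or_gt 0 (pF + pW - pbF) with h0 | h0
    · rw [aux_key P W hWmeas F hF 0 (pF + pW - pbF) h0]
      congr 1; funext ω
      rw [sub_zero]
      exact min_eq_right (max_le h0 (by have := hWnn ω; linarith))
    · rw [intervalIntegral.integral_symm (pF + pW - pbF) 0,
        aux_key P W hWmeas F hF (pF + pW - pbF) 0 (le_of_lt h0)]
      have l : (fun ω => min (0 - (pF + pW - pbF)) (max 0 (0 - W ω))) = fun _ => (0:ℝ) := by
        funext ω
        have := hWnn ω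
        rw [max_eq_left (by linarith), min_eq_right (by linarith)]
      have r : (fun ω => max 0 (pF + pW - pbF - W ω)) = fun _ => (0:ℝ) := by
        funext ω; have := hWnn ω; exact max_eq_left (by linarith)
      rw [l, r]; simp
  -- integrability facts
  have Imax : ∀ c : ℝ, Integrable (fun ω => max 0 (c - W ω)) P := fun c =>
    (integrable_const (0:ℝ)).sup ((integrable_const c).sub hWint)
  have Imin : ∀ c d : ℝ, Integrable (fun ω => min c (max 0 (d - W ω))) P := fun c d =>
    (integrable_const c).inf (Imax d)
  have I1 := Imax (pF + pW - pbF)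
  have I2 := Imin (pbF - pF) pW
  have I3 := Imin pF (pF + pW)
  -- pointwise identity
  have hfun : (fun ω => cost (W ω)) = fun ω =>
      v * max 0 (pF + pW - pbF - W ω) + cFu * min (pbF - pF) (max 0 (pW - W ω))
      + (cFd * min pF (max 0 (pF + pW - W ω)) - cFd * pF) := by
    funext ω
    rw [hcost]
    exact aux_scalar v cFu cFd pbF pF pW (W ω) hpF0 hpFb (hWnn ω)
  have IV : Integrable (fun ω => v * max 0 (pF + pW - pbF - W ω)) P := I1.const_mul v
  have IU : Integrable (fun ω => cFu * min (pbF - pF) (max 0 (pW - W ω))) P := I2.const_mul cFu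
  have ID : Integrable (fun ω => cFd * min pF (max 0 (pF + pW - W ω))) P := I3.const_mul cFd
  have IA : Integrable (fun ω => v * max 0 (pF + pW - pbF - W ω)
      + cFu * min (pbF - pF) (max 0 (pW - W ω))) P := IV.add IU
  have IB : Integrable (fun ω => cFd * min pF (max 0 (pF + pW - W ω)) - cFd * pF) P :=
    ID.sub (integrable_const (cFd * pF))
  rw [hfun,
    integral_add IA IB,
    integral_add IV IU,
    integral_sub ID (integrable_const (cFd * pF)),
    MeasureTheory.integral_const_mul, MeasureTheory.integral_const_mul, MeasureTheory.integral_const_mul,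
    MeasureTheory.integral_const, measureReal_def, measure_univ, ENNReal.toReal_one, one_smul,
    E1, E2, E3]
  ring
end

section
/- Let F be a continuous CDF with F(x) = 0 for x < 0 and F(x) = 1 for x ≥ p̄_W, where p̄_W > 0. Define c̃(p̃) piecewise: c̃(p̃) = (v − c_F⁺)·F(p̃ − p̄_F) + c_F⁺·F(p̃) for 0 ≤ p̃ ≤ l₁; c̃(p̃) = c_F + (v − c_F⁺)·F(p̃ − p̄_F) − c_F⁻·(1 − F(p̃)) for l₁ < p̃ < l₁ + p̄_F; c̃(p̃) = (v − c_F⁻)·F(p̃ − p̄_F) + c_F⁻·F(p̃) for p̃ ≥ l₁ + p̄_F, where l₁ = F⁻¹((c_F − c_F⁻)/(c_F⁺ − c_F⁻)) and v > c_F⁺ ≥ c_F ≥ c_F⁻ ≥ 0, c_F⁺ > c_F⁻. Then c̃ is nondecreasing and continuous on [0, ∞). -/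
open Set Filter Topology

/-- the marginal cost c̃ of the flexible-stochastic portfolio is
nondecreasing and continuous on [0, ∞). -/
theorem stmt6
    (F : ℝ → ℝ) (v cF cFu cFd pbF pbW l1 : ℝ)
    (hFcont : Continuous F) (hFmono : Monotone F)
    (hF0 : ∀ x < 0, F x = 0) (hF1 : ∀ x ≥ pbW, F x = 1)
    (hFrange : ∀ x, F x ∈ Set.Icc (0 : ℝ) 1)
    (h0 : 0 ≤ cFd) (h1 : cFd ≤ cF) (h2 : cF ≤ cFu) (h3 : cFu < v)
    (h4 : cFd < cFu) (hpbF : 0 < pbF) (hpbW : 0 < pbW)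
    (hl1 : l1 = sInf {x : ℝ | (cF - cFd) / (cFu - cFd) ≤ F x})
    (ctilde : ℝ → ℝ)
    (hc : ctilde = fun pt =>
      if pt ≤ l1 then (v - cFu) * F (pt - pbF) + cFu * F pt
      else if pt < l1 + pbF then cF + (v - cFu) * F (pt - pbF) - cFd * (1 - F pt)
      else (v - cFd) * F (pt - pbF) + cFd * F pt) :
    MonotoneOn ctilde (Set.Ici (0 : ℝ)) ∧ ContinuousOn ctilde (Set.Ici (0 : ℝ)) := by
  set α : ℝ := (cF - cFd) / (cFu - cFd) with hαdef
  have hd : (0:ℝ) < cFu - cFd := by linarith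
  have hα0 : 0 ≤ α := div_nonneg (by linarith) (by linarith)
  have hα1 : α ≤ 1 := by rw [hαdef, div_le_one hd]; linarith
  have hαmul : (cFu - cFd) * α = cF - cFd := by
    rw [hαdef]; field_simp
  -- F 0 = 0
  have hF00 : F 0 = 0 := by
    have ht1 : Tendsto F (𝓝[<] (0:ℝ)) (𝓝 (F 0)) :=
      (hFcont.tendsto 0).mono_left nhdsWithin_le_nhds
    have ht2 : Tendsto F (𝓝[<] (0:ℝ)) (𝓝 0) := by
      apply Tendsto.congr' _ tendsto_const_nhds
      filter_upwards [self_mem_nhdsWithin] with x hx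
      exact (hF0 x hx).symm
    exact tendsto_nhds_unique ht1 ht2
  have hFle0 : ∀ pt ≤ (0:ℝ), F pt ≤ 0 := fun pt h => hF00 ▸ hFmono h
  -- key facts about l1
  have hkey : 0 ≤ l1 ∧ (∀ pt ≤ l1, F pt ≤ α) ∧ (∀ pt, l1 ≤ pt → α ≤ F pt) := by
    rcases eq_or_lt_of_le hα0 with h0α | h0α
    · -- α = 0
      have hSuniv : {x : ℝ | α ≤ F x} = Set.univ := by
        ext x
        simp only [Set.mem_setOf_eq, Set.mem_univ, iff_true]
        rw [← h0α]; exact (hFrange x).1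
      have hl10 : l1 = 0 := by
        rw [hl1, hSuniv]
        exact Real.sInf_of_not_bddBelow (by simp [BddBelow, lowerBounds, Set.Nonempty]; intro x; exact ⟨x - 1, by linarith⟩)
      refine ⟨le_of_eq hl10.symm, ?_, ?_⟩
      · intro pt hpt
        rw [hl10] at hpt
        calc F pt ≤ 0 := hFle0 pt hpt
          _ ≤ α := hα0
      · intro pt _
        rw [← h0α]; exact (hFrange pt).1
    · -- α > 0
      set S := {x : ℝ | α ≤ F x} with hS
      have hlb : ∀ x ∈ S, (0:ℝ) ≤ x := by
        intro x hx
        by_contra hneg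
        push_neg at hneg
        have hx' : α ≤ F x := hx
        rw [hF0 x hneg] at hx'
        linarith
      have hbdd : BddBelow S := ⟨0, hlb⟩
      have hne : S.Nonempty := ⟨pbW, by
        show α ≤ F pbW
        rw [hF1 pbW le_rfl]; exact hα1⟩
      have hclosed : IsClosed S := isClosed_le continuous_const hFcont
      have hmem : l1 ∈ S := hl1 ▸ hclosed.csInf_mem hne hbdd
      have hl1nn : 0 ≤ l1 := hl1 ▸ le_csInf hne hlb
      have hlt : ∀ pt < l1, F pt ≤ α := by
        intro pt hpt
        by_contra hgt
        push_neg at hgt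
        have : pt ∈ S := le_of_lt hgt
        have : l1 ≤ pt := hl1 ▸ csInf_le hbdd this
        linarith
      refine ⟨hl1nn, ?_, ?_⟩
      · intro pt hpt
        rcases lt_or_eq_of_le hpt with hpt | hpt
        · exact hlt pt hpt
        · subst hpt
          have ht1 : Tendsto F (𝓝[<] pt) (𝓝 (F pt)) :=
            (hFcont.tendsto pt).mono_left nhdsWithin_le_nhds
          refine le_of_tendsto ht1 ?_
          filter_upwards [self_mem_nhdsWithin] with x hx
          exact hlt x hx
      · intro pt hpt
        exact le_trans hmem (hFmono hpt)
  obtain ⟨hl1nn, hkey1, hkey2⟩ := hkey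
  -- the global formula
  set G : ℝ → ℝ := fun pt =>
    (v - cFu) * min (F (pt - pbF)) α + (v - cFd) * max (F (pt - pbF)) α
      + cFu * min (F pt) α + cFd * max (F pt) α - v * α with hG
  have hEq : Set.EqOn ctilde G (Set.Ici (0:ℝ)) := by
    intro pt _
    rw [hc, hG]
    simp only
    split_ifs with hA hB
    · -- pt ≤ l1
      have hf1 : F pt ≤ α := hkey1 pt hA
      have hf2 : F (pt - pbF) ≤ α := le_trans (hFmono (by linarith)) hf1
      rw [min_eq_left hf1, min_eq_left hf2, max_eq_right hf1, max_eq_right hf2]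
      ring
    · -- l1 < pt < l1 + pbF
      push_neg at hA
      have hf1 : α ≤ F pt := hkey2 pt (le_of_lt hA)
      have hf2 : F (pt - pbF) ≤ α := hkey1 (pt - pbF) (by linarith)
      rw [min_eq_right hf1, min_eq_left hf2, max_eq_left hf1, max_eq_right hf2]
      linear_combination -hαmul
    · -- l1 + pbF ≤ pt
      push_neg at hA hB
      have hf2 : α ≤ F (pt - pbF) := hkey2 (pt - pbF) (by linarith)
      have hf1 : α ≤ F pt := le_trans hf2 (hFmono (by linarith))
      rw [min_eq_right hf1, min_eq_right hf2, max_eq_left hf1, max_eq_left hf2]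
      ring
  have hGmono : Monotone G := by
    intro a b hab
    have hm1 : F (a - pbF) ≤ F (b - pbF) := hFmono (by linarith)
    have hm2 : F a ≤ F b := hFmono hab
    have t1 : min (F (a - pbF)) α ≤ min (F (b - pbF)) α := min_le_min hm1 le_rfl
    have t2 : max (F (a - pbF)) α ≤ max (F (b - pbF)) α := max_le_max hm1 le_rfl
    have t3 : min (F a) α ≤ min (F b) α := min_le_min hm2 le_rfl
    have t4 : max (F a) α ≤ max (F b) α := max_le_max hm2 le_rfl
    have c1 : (v - cFu) * min (F (a - pbF)) α ≤ (v - cFu) * min (F (b - pbF)) α :=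
      mul_le_mul_of_nonneg_left t1 (by linarith)
    have c2 : (v - cFd) * max (F (a - pbF)) α ≤ (v - cFd) * max (F (b - pbF)) α :=
      mul_le_mul_of_nonneg_left t2 (by linarith)
    have c3 : cFu * min (F a) α ≤ cFu * min (F b) α :=
      mul_le_mul_of_nonneg_left t3 (by linarith)
    have c4 : cFd * max (F a) α ≤ cFd * max (F b) α :=
      mul_le_mul_of_nonneg_left t4 (by linarith)
    simp only [hG]
    linarith
  have hGcont : Continuous G := by
    apply Continuous.sub _ continuous_const
    apply Continuous.add
    apply Continuous.add
    apply Continuous.add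
    · exact continuous_const.mul ((hFcont.comp (continuous_id.sub continuous_const)).min continuous_const)
    · exact continuous_const.mul ((hFcont.comp (continuous_id.sub continuous_const)).max continuous_const)
    · exact continuous_const.mul (hFcont.min continuous_const)
    · exact continuous_const.mul (hFcont.max continuous_const)
  constructor
  · intro a ha b hb hab
    rw [hEq ha, hEq hb]
    exact hGmono hab
  · exact hGcont.continuousOn.congr hEq
end

section
/- (Capacity-adequate simplification of l₃) Suppose F is a continuous CDF with F(x) = 0 for x ≤ 0 and F(x) = 1 for x ≥ p̄_W, where p̄_F ≥ p̄_W > 0, v > c_F⁺ ≥ c_F > c_I > 0 and c_F ≥ c_F⁻ > 0. Let l₁ = F⁻¹((c_F − c_F⁻)/(c_F⁺ − c_F⁻)). Then l₃ = min{ l ≥ l₁ : c_F + (v − c_F⁺)·F(l − p̄_F) − c_F⁻·(1 − F(l)) ≥ c_I } satisfies l₃ = max(l₁, F⁻¹(1 − (c_F − c_I)/c_F⁻)) and l₁ ≤ l₃ ≤ p̄_F. -/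
open Set

lemma stmt8_aux (F : ℝ → ℝ) (hFcont : Continuous F) (hF0 : ∀ x ≤ 0, F x = 0)
    (hFnn : ∀ x, 0 ≤ F x) (pbW γ : ℝ) (hpbW : 0 ≤ pbW) (hmem : γ ≤ F pbW) :
    0 ≤ sInf {x : ℝ | γ ≤ F x} ∧ sInf {x : ℝ | γ ≤ F x} ≤ pbW ∧
      γ ≤ F (sInf {x : ℝ | γ ≤ F x}) ∧
      ∀ l, γ ≤ F l → 0 ≤ l → sInf {x : ℝ | γ ≤ F x} ≤ l := by
  set S := {x : ℝ | γ ≤ F x} with hS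
  by_cases hγ : 0 < γ
  · have hbdd : BddBelow S := by
      refine ⟨0, fun x hx => ?_⟩
      by_contra h
      push_neg at h
      have h0 := hF0 x h.le
      have hx' : γ ≤ F x := hx
      linarith
    have hne : S.Nonempty := ⟨pbW, hmem⟩
    have hclosed : IsClosed S := by
      have : S = F ⁻¹' Ici γ := rfl
      rw [this]
      exact IsClosed.preimage hFcont isClosed_Ici
    have hmemInf : sInf S ∈ S := hclosed.csInf_mem hne hbdd
    refine ⟨le_csInf hne (fun x hx => ?_), csInf_le hbdd hmem, hmemInf,
      fun l hl _ => csInf_le hbdd hl⟩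
    by_contra h
    push_neg at h
    have h0 := hF0 x h.le
    have hx' : γ ≤ F x := hx
    linarith
  · push_neg at hγ
    have hSuniv : S = univ := by
      ext x; simp only [hS, mem_setOf_eq, mem_univ, iff_true]
      exact le_trans hγ (hFnn x)
    have hInf : sInf S = 0 := by
      refine Real.sInf_of_not_bddBelow ?_
      rw [hSuniv]
      exact not_bddBelow_univ
    rw [hInf]
    refine ⟨le_refl 0, hpbW, ?_, fun l _ hl => hl⟩
    rw [hF0 0 le_rfl]; exact hγ

/-- capacity-adequate simplification of l₃:
l₃ = max(l₁, F⁻¹(1 − (c_F − c_I)/c_F⁻)) and l₁ ≤ l₃ ≤ p̄_F. -/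
theorem stmt8
    (F : ℝ → ℝ) (v cF cFu cFd cI pbF pbW l1 l3 : ℝ)
    (hFcont : Continuous F) (hFmono : Monotone F)
    (hF0 : ∀ x ≤ 0, F x = 0) (hF1 : ∀ x ≥ pbW, F x = 1)
    (hFrange : ∀ x, F x ∈ Set.Icc (0 : ℝ) 1)
    (hpbW : 0 < pbW) (hcap : pbW ≤ pbF)
    (hcI : 0 < cI) (hIc : cI < cF) (hcu : cF ≤ cFu) (hv : cFu < v)
    (hcd : 0 < cFd) (hdc : cFd ≤ cF) (hud : cFd < cFu)
    (hl1 : l1 = sInf {x : ℝ | (cF - cFd) / (cFu - cFd) ≤ F x})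
    (hl3 : l3 = sInf {l : ℝ | l1 ≤ l ∧
        cI ≤ cF + (v - cFu) * F (l - pbF) - cFd * (1 - F l)}) :
    l3 = max l1 (sInf {x : ℝ | 1 - (cF - cI) / cFd ≤ F x}) ∧
      l1 ≤ l3 ∧ l3 ≤ pbF := by
  have hFnn : ∀ x, 0 ≤ F x := fun x => (hFrange x).1
  have hFpbW : F pbW = 1 := hF1 pbW le_rfl
  set α := (cF - cFd) / (cFu - cFd) with hαdef
  set β := 1 - (cF - cI) / cFd with hβdef
  have hα1 : α ≤ 1 := by
    rw [hαdef, div_le_one (by linarith)]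
    linarith
  have hβ1 : β < 1 := by
    have : 0 < (cF - cI) / cFd := div_pos (by linarith) hcd
    rw [hβdef]; linarith
  obtain ⟨hl1nn, hl1pbW, _, _⟩ :=
    stmt8_aux F hFcont hF0 hFnn pbW α hpbW.le (by rw [hFpbW]; exact hα1)
  rw [← hl1] at hl1nn hl1pbW
  obtain ⟨hL2nn, hL2pbW, hFL2, hL2lb⟩ :=
    stmt8_aux F hFcont hF0 hFnn pbW β hpbW.le (by rw [hFpbW]; exact hβ1.le)
  set L2 := sInf {x : ℝ | β ≤ F x} with hL2def
  set M := max l1 L2 with hMdef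
  have hMpbW : M ≤ pbW := max_le hl1pbW hL2pbW
  have hFM : β ≤ F M := le_trans hFL2 (hFmono (le_max_right _ _))
  set S := {l : ℝ | l1 ≤ l ∧
      cI ≤ cF + (v - cFu) * F (l - pbF) - cFd * (1 - F l)} with hSdef
  have hMS : M ∈ S := by
    refine ⟨le_max_left _ _, ?_⟩
    have hFM0 : F (M - pbF) = 0 := hF0 _ (by linarith)
    rw [hFM0]
    have h1 : 1 - F M ≤ (cF - cI) / cFd := by rw [hβdef] at hFM; linarith
    have h2 : (1 - F M) * cFd ≤ cF - cI := by
      rw [← le_div_iff₀ hcd]; exact h1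
    nlinarith
  have hSbdd : BddBelow S := ⟨l1, fun l hl => hl.1⟩
  have hlb : ∀ l ∈ S, M ≤ l := by
    intro l hl
    refine max_le hl.1 ?_
    by_cases hcase : pbF ≤ l
    · linarith
    · push_neg at hcase
      have hFl0 : F (l - pbF) = 0 := hF0 _ (by linarith)
      have hcond := hl.2
      rw [hFl0] at hcond
      have hFlβ : β ≤ F l := by
        rw [hβdef]
        have h2 : (1 - F l) * cFd ≤ cF - cI := by nlinarith
        have := (le_div_iff₀ hcd).mpr h2
        linarith [this]
      exact hL2lb l hFlβ (le_trans hl1nn hl.1)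
  have hl3M : l3 = M := by
    rw [hl3]
    exact le_antisymm (csInf_le hSbdd hMS) (le_csInf ⟨M, hMS⟩ hlb)
  refine ⟨hl3M, ?_, ?_⟩
  · rw [hl3M]; exact le_max_left _ _
  · rw [hl3M]; linarith
end

section
/- (Ordering of threshold loads) Let F be a nondecreasing function with values in [0,1], F(x) = 0 for x < 0, and let v > c_F⁺ ≥ c_F ≥ c_F⁻ ≥ 0, 0 < c_I < c_F, p̄_F > 0, p̄_I > 0. Define l₂ = min{l ≥ 0 : (v − c_F⁺)F(l − p̄_F) + c_F⁺F(l) ≥ c_I}, l₅ = min{l ≥ 0 : (v − c_F⁺)F(l − p̄_F − p̄_I) + c_F⁺F(l − p̄_I) ≥ c_F}, and l₆ = min{l ≥ 0 : (v − c_F⁻)F(l − p̄_F − p̄_I) + c_F⁻F(l − p̄_I) ≥ c_F}, whenever these minima exist. Then l₂ ≤ l₅ ≤ l₆. -/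
open Set Filter

/-- ordering of the threshold loads l₂ ≤ l₅ ≤ l₆. -/
theorem stmt9
    (F : ℝ → ℝ) (v cF cFu cFd cI pbF pbI l2 l5 l6 : ℝ)
    (hFmono : Monotone F)
    (hFrc : ∀ x, ContinuousWithinAt F (Set.Ici x) x)
    (hF0 : ∀ x < 0, F x = 0)
    (hFrange : ∀ x, F x ∈ Set.Icc (0 : ℝ) 1)
    (hFlim : Tendsto F atTop (nhds 1))
    (hv : cFu < v) (hcu : cF ≤ cFu) (hdc : cFd ≤ cF) (hcd : 0 ≤ cFd)
    (hcI : 0 < cI) (hIc : cI < cF) (hpbF : 0 < pbF) (hpbI : 0 < pbI)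
    (hl2 : IsLeast {l : ℝ | 0 ≤ l ∧ cI ≤ (v - cFu) * F (l - pbF) + cFu * F l} l2)
    (hl5 : IsLeast {l : ℝ | 0 ≤ l ∧
        cF ≤ (v - cFu) * F (l - pbF - pbI) + cFu * F (l - pbI)} l5)
    (hl6 : IsLeast {l : ℝ | 0 ≤ l ∧
        cF ≤ (v - cFd) * F (l - pbF - pbI) + cFd * F (l - pbI)} l6) :
    l2 ≤ l5 ∧ l5 ≤ l6 := by
  obtain ⟨⟨h5pos, h5ineq⟩, h5min⟩ := hl5
  obtain ⟨⟨h6pos, h6ineq⟩, h6min⟩ := hl6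
  have hcFu0 : (0:ℝ) ≤ cFu := le_trans hcd (le_trans hdc hcu)
  constructor
  · apply hl2.2
    refine ⟨h5pos, ?_⟩
    have h1 : F (l5 - pbF - pbI) ≤ F (l5 - pbF) := hFmono (by linarith)
    have h2 : F (l5 - pbI) ≤ F l5 := hFmono (by linarith)
    nlinarith
  · apply h5min
    refine ⟨h6pos, ?_⟩
    have h1 : F (l6 - pbF - pbI) ≤ F (l6 - pbI) := hFmono (by linarith)
    nlinarith [sub_nonneg.mpr (le_trans hdc hcu)]
end

section
/- (Cost comparison in the centralized dispatch) Let A(s) = (v − c_F⁺)F(s − p̄_F) + c_F⁺F(s), where F is a continuous CDF with F(x) = 0 for x < 0 and v > c_F⁺ > 0, p̄_F > 0. Let l₂ = min{l ≥ 0 : A(l) ≥ c_I} with 0 < c_I. Define z¹(l) = ∫₀^{min(l, l₂)} A(s)ds + c_I·max(l − l₂, 0) and, for l₂ ≤ l₁ and p̄_I ≤ l ≤ l₂ + p̄_I, z²(l) = c_I·p̄_I + ∫₀^{l − p̄_I} A(s)ds. Then for all l with p̄_I ≤ l ≤ l₂ + p̄_I it holds that z¹(l) ≤ z²(l), with equality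 at l = l₂ + p̄_I. -/
open Set intervalIntegral

/-- cost comparison in the centralized dispatch: z¹(l) ≤ z²(l)
for p̄_I ≤ l ≤ l₂ + p̄_I, with equality at l = l₂ + p̄_I. -/
theorem stmt12
    (F : ℝ → ℝ) (v cFu cI pbF pbI l2 : ℝ)
    (hFcont : Continuous F) (hFmono : Monotone F)
    (hF0 : ∀ x < 0, F x = 0) (hFrange : ∀ x, F x ∈ Set.Icc (0 : ℝ) 1)
    (hv : cFu < v) (hcu : 0 < cFu) (hpbF : 0 < pbF) (hpbI : 0 < pbI)
    (hcI : 0 < cI)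
    (A : ℝ → ℝ) (hA : A = fun s => (v - cFu) * F (s - pbF) + cFu * F s)
    (hl2 : IsLeast {l : ℝ | 0 ≤ l ∧ cI ≤ A l} l2)
    (z1 z2 : ℝ → ℝ)
    (hz1 : z1 = fun l => (∫ s in (0:ℝ)..(min l l2), A s) + cI * max (l - l2) 0)
    (hz2 : z2 = fun l => cI * pbI + ∫ s in (0:ℝ)..(l - pbI), A s) :
    (∀ l, pbI ≤ l → l ≤ l2 + pbI → z1 l ≤ z2 l) ∧
      z1 (l2 + pbI) = z2 (l2 + pbI) := by
  have hAcont : Continuous A := by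
    rw [hA]
    exact (continuous_const.mul (hFcont.comp (continuous_id.sub continuous_const))).add
      (continuous_const.mul hFcont)
  have hInt : ∀ a b : ℝ, IntervalIntegrable A MeasureTheory.volume a b :=
    fun a b => hAcont.intervalIntegrable a b
  have hl2nn : 0 ≤ l2 := hl2.1.1
  have hlt : ∀ s, s < l2 → A s < cI := by
    intro s hs
    by_contra h
    push_neg at h
    rcases lt_or_ge s 0 with h0 | h0
    · have h1 : F (s - pbF) = 0 := hF0 _ (by linarith)
      have h2 : F s = 0 := hF0 _ h0
      rw [hA] at h
      simp only [h1, h2, mul_zero, add_zero] at h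
      linarith
    · exact absurd (hl2.2 ⟨h0, h⟩) (not_le.mpr hs)
  have hle : ∀ s, s ≤ l2 → A s ≤ cI := by
    intro s hs
    rcases eq_or_lt_of_le hs with heq | hlt'
    · subst heq
      refine le_of_tendsto (hAcont.continuousWithinAt (s := Set.Iio s)) ?_
      filter_upwards [self_mem_nhdsWithin] with x hx
      exact (hlt x hx).le
    · exact (hlt s hlt').le
  subst hz1 hz2
  constructor
  · intro l hlb hub
    set m := min l l2 with hm
    have h1 : l - pbI ≤ m := le_min (by linarith) (by linarith)
    have h2 : m ≤ l2 := min_le_right _ _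
    have hsplit : (∫ s in (0:ℝ)..(l - pbI), A s) + ∫ s in (l - pbI)..m, A s
        = ∫ s in (0:ℝ)..m, A s :=
      intervalIntegral.integral_add_adjacent_intervals (hInt _ _) (hInt _ _)
    have hbound : (∫ s in (l - pbI)..m, A s) ≤ cI * (m - (l - pbI)) := by
      have hmono := intervalIntegral.integral_mono_on h1 (hInt _ _)
        (_root_.intervalIntegrable_const (c := cI))
        (fun x hx => hle x (le_trans hx.2 h2))
      simpa [mul_comm] using hmono
    have hmax : max (l - l2) 0 = l - m := by
      rcases le_total l l2 with h | h
      · rw [hm, min_eq_left h, max_eq_right (by linarith : l - l2 ≤ 0)]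
        ring
      · rw [hm, min_eq_right h, max_eq_left (by linarith : (0:ℝ) ≤ l - l2)]
    simp only
    rw [hmax]
    nlinarith [hsplit, hbound]
  · simp only
    rw [min_eq_right (by linarith : l2 ≤ l2 + pbI),
      show l2 + pbI - l2 = pbI by ring, max_eq_left hpbI.le,
      show l2 + pbI - pbI = l2 by ring]
    ring
end

section
/- (Derivative of cost difference is nonpositive) With A(s) = (v − c_F⁺)F(s − p̄_F) + c_F⁺F(s) as above (A nondecreasing, A(s) ≤ c_I for s ≤ l₂), define D(l) = z²(l) − z¹(l) = c_I·(p̄_I − max(l − l₂, 0)) − ∫_{l − p̄_I}^{min(l, l₂)} A(s)ds for p̄_I ≤ l ≤ l₂ + p̄_I. Then D is differentiable a.e. with D′(l) = −c_I + A(l − p̄_I) ≤ 0 when l ≥ l₂, and D′(l) = −A(l) + A(l − p̄_I) ≤ 0 when l < l₂. Consequently D is nonincreasing on [p̄_I, l₂ + p̄_I]. -/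
open Set intervalIntegral

/-- the cost difference D(l) = z²(l) − z¹(l) has nonpositive
derivative (a.e.) and is nonincreasing on [p̄_I, l₂ + p̄_I]. -/
theorem stmt13
    (F : ℝ → ℝ) (v cFu cI pbF pbI l2 : ℝ)
    (hFcont : Continuous F) (hFmono : Monotone F)
    (hF0 : ∀ x < 0, F x = 0) (hFrange : ∀ x, F x ∈ Set.Icc (0 : ℝ) 1)
    (hv : cFu < v) (hcu : 0 ≤ cFu) (hpbF : 0 < pbF) (hpbI : 0 < pbI)
    (hcI : 0 < cI)
    (A : ℝ → ℝ) (hA : A = fun s => (v - cFu) * F (s - pbF) + cFu * F s)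
    (hl2 : IsLeast {l : ℝ | 0 ≤ l ∧ cI ≤ A l} l2)
    (D : ℝ → ℝ)
    (hD : D = fun l => cI * (pbI - max (l - l2) 0) - ∫ s in (l - pbI)..(min l l2), A s) :
    (∀ l, pbI ≤ l → l < l2 + pbI → l2 < l →
        HasDerivAt D (-cI + A (l - pbI)) l ∧ -cI + A (l - pbI) ≤ 0) ∧
    (∀ l, pbI < l → l ≤ l2 + pbI → l < l2 →
        HasDerivAt D (-(A l) + A (l - pbI)) l ∧ -(A l) + A (l - pbI) ≤ 0) ∧
    AntitoneOn D (Set.Icc pbI (l2 + pbI)) := by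
  have hAcont : Continuous A := by
    subst hA
    exact (continuous_const.mul (hFcont.comp (continuous_id.sub continuous_const))).add
      (continuous_const.mul hFcont)
  have hAmono : Monotone A := by
    intro a b hab
    simp only [hA]
    have := hFmono (show a - pbF ≤ b - pbF by linarith)
    have := hFmono hab
    nlinarith
  have hAle : ∀ s, s < l2 → A s ≤ cI := by
    intro s hs
    rcases lt_or_ge s 0 with h0 | h0
    · have h1 : F (s - pbF) = 0 := hF0 _ (by linarith)
      have h2 : F s = 0 := hF0 _ h0
      simp [hA, h1, h2, hcI.le]
    · by_contra h
      push_neg at h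
      exact absurd (hl2.2 ⟨h0, h.le⟩) (not_le.mpr hs)
  set G : ℝ → ℝ := fun u => ∫ x in (0:ℝ)..u, A x with hGdef
  have hG : ∀ b, HasDerivAt G (A b) b := fun b =>
    (hAcont.integral_hasStrictDerivAt 0 b).hasDerivAt
  have hGcont : Continuous G :=
    continuous_iff_continuousAt.mpr fun x => (hG x).continuousAt
  have hDeq : ∀ l, D l = cI * (pbI - max (l - l2) 0) - (G (min l l2) - G (l - pbI)) := by
    intro l
    rw [hD]
    simp only [hGdef]
    rw [intervalIntegral.integral_interval_sub_left
      (hAcont.intervalIntegrable _ _) (hAcont.intervalIntegrable _ _)]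
  have hDcont : Continuous D := by
    have : D = fun l => cI * (pbI - max (l - l2) 0) - (G (min l l2) - G (l - pbI)) :=
      funext hDeq
    rw [this]
    fun_prop
  -- derivative in regime l > l2
  have hder1 : ∀ l, l2 < l → l < l2 + pbI → HasDerivAt D (-cI + A (l - pbI)) l := by
    intro l h1 h2
    have hev : D =ᶠ[nhds l] fun l' => cI * (pbI - (l' - l2)) - (G l2 - G (l' - pbI)) := by
      filter_upwards [eventually_gt_nhds h1] with l' hl'
      rw [hDeq l', min_eq_right hl'.le, max_eq_left (by linarith)]
    have h3 : HasDerivAt (fun l' : ℝ => cI * (pbI - (l' - l2)) - (G l2 - G (l' - pbI)))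
        (cI * (0 - (1 - 0)) - (0 - A (l - pbI) * (1 - 0))) l := by
      exact (((hasDerivAt_const l pbI).sub ((hasDerivAt_id l).sub
        (hasDerivAt_const l l2))).const_mul cI).sub ((hasDerivAt_const l (G l2)).sub
        (((hG (l - pbI)).comp_sub_const l pbI).congr_deriv (by ring)))
    have h4 : HasDerivAt (fun l' : ℝ => cI * (pbI - (l' - l2)) - (G l2 - G (l' - pbI)))
        (-cI + A (l - pbI)) l := by convert h3 using 1; ring
    exact h4.congr_of_eventuallyEq hev
  -- derivative in regime l < l2
  have hder2 : ∀ l, l < l2 → HasDerivAt D (-(A l) + A (l - pbI)) l := by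
    intro l h1
    have hev : D =ᶠ[nhds l] fun l' => cI * pbI - (G l' - G (l' - pbI)) := by
      filter_upwards [eventually_lt_nhds h1] with l' hl'
      rw [hDeq l', min_eq_left hl'.le, max_eq_right (by linarith), sub_zero]
    have h3 : HasDerivAt (fun l' : ℝ => cI * pbI - (G l' - G (l' - pbI)))
        (0 - (A l - A (l - pbI) * (1 - 0))) l := by
      exact (hasDerivAt_const l (cI * pbI)).sub ((hG l).sub (((hG (l - pbI)).comp_sub_const l pbI).congr_deriv
        (by ring)))
    have h4 : HasDerivAt (fun l' : ℝ => cI * pbI - (G l' - G (l' - pbI)))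
        (-(A l) + A (l - pbI)) l := by convert h3 using 1; ring
    exact h4.congr_of_eventuallyEq hev
  refine ⟨fun l _ h2 h3 => ⟨hder1 l h3 h2, by have := hAle (l - pbI) (by linarith); linarith⟩,
    fun l _ _ h3 => ⟨hder2 l h3, by have := hAmono (show l - pbI ≤ l by linarith); linarith⟩, ?_⟩
  -- Antitone
  have hant : ∀ a b : ℝ, (∀ x, a < x → x < b → l2 < x → x < l2 + pbI ∨ x < l2) →
      AntitoneOn D (Set.Icc a b) → True := fun _ _ _ _ => trivial
  have key : ∀ a b : ℝ, (∀ x, x ∈ Set.Ioo a b → deriv D x ≤ 0) →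
      (∀ x, x ∈ Set.Ioo a b → DifferentiableAt ℝ D x) → AntitoneOn D (Set.Icc a b) := by
    intro a b h1 h2
    exact antitoneOn_of_deriv_nonpos (convex_Icc a b) hDcont.continuousOn
      (fun x hx => (h2 x (by rwa [interior_Icc] at hx)).differentiableWithinAt)
      (fun x hx => h1 x (by rwa [interior_Icc] at hx))
  rcases le_or_gt l2 pbI with hc | hc
  · apply key
    · intro x hx
      have hd := hder1 x (lt_of_le_of_lt hc hx.1) hx.2
      rw [hd.deriv]
      have := hAle (x - pbI) (by linarith [hx.2])
      linarith
    · intro x hx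
      exact (hder1 x (lt_of_le_of_lt hc hx.1) hx.2).differentiableAt
  · have ant1 : AntitoneOn D (Set.Icc pbI l2) := by
      apply key
      · intro x hx
        have hd := hder2 x hx.2
        rw [hd.deriv]
        have := hAmono (show x - pbI ≤ x by linarith)
        linarith
      · intro x hx
        exact (hder2 x hx.2).differentiableAt
    have ant2 : AntitoneOn D (Set.Icc l2 (l2 + pbI)) := by
      apply key
      · intro x hx
        have hd := hder1 x hx.1 hx.2
        rw [hd.deriv]
        have := hAle (x - pbI) (by linarith [hx.2])
        linarith
      · intro x hx
        exact (hder1 x hx.1 hx.2).differentiableAt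
    intro x hx y hy hxy
    rcases le_or_gt y l2 with hyl | hyl
    · exact ant1 ⟨hx.1, le_trans hxy hyl⟩ ⟨hy.1, hyl⟩ hxy
    · rcases le_or_gt l2 x with hxl | hxl
      · exact ant2 ⟨hxl, le_trans hxy hy.2⟩ ⟨hyl.le, hy.2⟩ hxy
      · calc D y ≤ D l2 := ant2 ⟨le_refl _, by linarith⟩ ⟨hyl.le, hy.2⟩ hyl.le
          _ ≤ D x := ant1 ⟨hx.1, hxl.le⟩ ⟨hc.le, le_refl _⟩ hxl.le
end
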